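/- Let ϑ > 0 and r > ϑ, set T = r/ϑ, and let N be the unique positive integer with 2N − 1 ≤ (T + 1/T)/2 < 2N + 1. Let Ω be a p×p real symmetric positive definite matrix with all diagonal entries equal to 1 such that: for every integer 2 ≤ k ≤ 2N − 1, λ_k*(Ω) ≥ max over integers j with (k+1)/2 ≤ j ≤ min(k, N) of [ ((T+1/T)/2 − 2j + 2 + √(((T+1/T)/2 − 2j + 2)² − 1)) / ((2k − 2j + 1)·T) ]; and for every integer 2 ≤ k ≤ 2N, λ_k*(Ω) ≥ max over integers j with k/2 ≤ j ≤ min(k−1, N) of [ ((T+1/T)/2 + 1 − 2j) / ((k − j)·T) ]. Then for every pair of disjoint subsets D, F of {1,…,p} with D nonempty, ρ(D, F; Ω) ≥ (ϑ + r)²/(4r). -/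

import Mathlib

open Matrix

/-- `ω(D,F;Ω)`: the minimum (infimum) of
`ξᵀ(Ω_{D,D} − Ω_{D,F}(Ω_{F,F})⁻¹Ω_{F,D})ξ` over vectors `ξ ∈ ℝ^D` with `|ξ_i| ≥ 1`. -/
noncomputable def omegaDF {p : ℕ} (Ω : Matrix (Fin p) (Fin p) ℝ)
    (D F : Finset (Fin p)) : ℝ :=
  sInf {q : ℝ | ∃ ξ : ↥D → ℝ, (∀ i, 1 ≤ |ξ i|) ∧
    q = ξ ⬝ᵥ ((Ω.submatrix (fun i : ↥D => (i : Fin p)) (fun j : ↥D => (j : Fin p))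
        - Ω.submatrix (fun i : ↥D => (i : Fin p)) (fun j : ↥F => (j : Fin p))
          * (Ω.submatrix (fun i : ↥F => (i : Fin p)) (fun j : ↥F => (j : Fin p)))⁻¹
          * Ω.submatrix (fun i : ↥F => (i : Fin p)) (fun j : ↥D => (j : Fin p))) *ᵥ ξ)}

/-- `ρ(D,F;Ω)` with parameters `ϑ, r`. -/
noncomputable def rhoDF {p : ℕ} (Ω : Matrix (Fin p) (Fin p) ℝ) (ϑ r : ℝ)
    (D F : Finset (Fin p)) : ℝ :=
  if Even D.card then
    ((D.card : ℝ) + 2 * F.card) * ϑ / 2 + omegaDF Ω D F * r / 4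
  else
    ((D.card : ℝ) + 2 * F.card) * ϑ / 2 + ϑ / 2 +
      (max (Real.sqrt (omegaDF Ω D F * r) - ϑ / Real.sqrt (omegaDF Ω D F * r)) 0) ^ 2 / 4

/-- `λ_k*(Ω)`: the minimum over all `k×k` principal submatrices of `Ω` of the smallest
eigenvalue, characterized as the minimal Rayleigh quotient over unit vectors. -/
noncomputable def lambdaStar {p : ℕ} (Ω : Matrix (Fin p) (Fin p) ℝ) (k : ℕ) : ℝ :=
  sInf {lam : ℝ | ∃ S : Finset (Fin p), S.card = k ∧ ∃ ξ : ↥S → ℝ,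
    (∑ i, ξ i ^ 2) = 1 ∧
    lam = ξ ⬝ᵥ (Ω.submatrix (fun i : ↥S => (i : Fin p)) (fun j : ↥S => (j : Fin p)) *ᵥ ξ)}

section Aux

variable {p : ℕ} {Ω : Matrix (Fin p) (Fin p) ℝ}

lemma quadform_nonneg (hpd : Ω.PosDef) (S : Finset (Fin p)) (ξ : ↥S → ℝ) :
    0 ≤ ξ ⬝ᵥ (Ω.submatrix (fun i : ↥S => (i : Fin p)) (fun j : ↥S => (j : Fin p)) *ᵥ ξ) := by
  have h := (hpd.posSemidef.submatrix (fun i : ↥S => (i : Fin p))).dotProduct_mulVec_nonneg ξ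
  simpa using h

lemma lambdaStar_nonneg (hpd : Ω.PosDef) (k : ℕ) : 0 ≤ lambdaStar Ω k := by
  apply Real.sInf_nonneg
  rintro x ⟨S, -, ξ, -, rfl⟩
  exact quadform_nonneg hpd S ξ

lemma sum_subtype_eq {M : Type*} [AddCommMonoid M] (S : Finset (Fin p)) (g : Fin p → M)
    (G : ↥S → M) (hg : ∀ j : ↥S, g ↑j = G j) (h0 : ∀ j ∉ S, g j = 0) :
    ∑ j : Fin p, g j = ∑ j : ↥S, G j := by
  rw [← Finset.sum_subset (Finset.subset_univ S) (fun x _ hx => h0 x hx)]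
  rw [← Finset.sum_attach S g, Finset.univ_eq_attach]
  exact Finset.sum_congr rfl fun j _ => hg j

lemma posdef_submatrix (hpd : Ω.PosDef) (S : Finset (Fin p)) :
    (Ω.submatrix (fun i : ↥S => (i : Fin p)) (fun j : ↥S => (j : Fin p))).PosDef := by
  classical
  refine Matrix.PosDef.of_dotProduct_mulVec_pos ?_ ?_
  · exact hpd.isHermitian.submatrix _
  · intro x hx
    set y : Fin p → ℝ := fun i => if h : i ∈ S then x ⟨i, h⟩ else 0 with hy
    have hyj : ∀ j : ↥S, y ↑j = x j := fun j => by simp [hy, j.2]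
    have hy0 : ∀ j ∉ S, y j = 0 := fun j hj => by simp [hy, hj]
    have hyne : y ≠ 0 := by
      intro h
      obtain ⟨i, hi⟩ := Function.ne_iff.mp hx
      exact hi (by rw [← hyj i, h]; rfl)
    have hinner : ∀ i : Fin p, (Ω *ᵥ y) i
        = ∑ j : ↥S, Ω i ↑j * x j := by
      intro i
      show ∑ j : Fin p, Ω i j * y j = _
      refine sum_subtype_eq S _ _ (fun j => by rw [hyj]) (fun j hj => by rw [hy0 j hj, mul_zero])
    have hform : star x ⬝ᵥ ((Ω.submatrix (fun i : ↥S => (i : Fin p))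
          (fun j : ↥S => (j : Fin p))) *ᵥ x) = star y ⬝ᵥ (Ω *ᵥ y) := by
      simp only [star_trivial]
      show ∑ i : ↥S, x i * _ = ∑ i : Fin p, y i * (Ω *ᵥ y) i
      refine (sum_subtype_eq S _ _ (fun i => ?_) (fun i hi => by rw [hy0 i hi, zero_mul])).symm
      rw [hyj, hinner]
      rfl
    rw [hform]
    exact hpd.dotProduct_mulVec_pos hyne

def unionEquiv {D F : Finset (Fin p)} (hDF : Disjoint D F) : (↥D ⊕ ↥F) ≃ ↥(D ∪ F) where
  toFun := Sum.elim (fun i => ⟨i, Finset.mem_union_left _ i.2⟩)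
    (fun i => ⟨i, Finset.mem_union_right _ i.2⟩)
  invFun := fun x => if h : (x : Fin p) ∈ D then Sum.inl ⟨x, h⟩
    else Sum.inr ⟨x, (Finset.mem_union.mp x.2).resolve_left h⟩
  left_inv := by
    rintro (i | i)
    · simp [i.2]
    · have h : (i : Fin p) ∉ D := fun h => (Finset.disjoint_left.mp hDF h) i.2
      simp [h]
  right_inv := fun x => by
    by_cases h : (x : Fin p) ∈ D <;> simp [h]

end Aux

section Key

variable {p : ℕ} {Ω : Matrix (Fin p) (Fin p) ℝ} {D F : Finset (Fin p)}

set_option maxHeartbeats 1000000 in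
lemma omega_ge (hpd : Ω.PosDef) (hD : D.Nonempty) (hDF : Disjoint D F) {B : ℝ} (hB : 0 ≤ B)
    (hBl : B ≤ lambdaStar Ω (D.card + F.card)) :
    (D.card : ℝ) * B ≤ omegaDF Ω D F := by
  classical
  have hdef : omegaDF Ω D F = sInf {q : ℝ | ∃ ξ : ↥D → ℝ, (∀ i, 1 ≤ |ξ i|) ∧
    q = ξ ⬝ᵥ ((Ω.submatrix (fun i : ↥D => (i : Fin p)) (fun j : ↥D => (j : Fin p))
        - Ω.submatrix (fun i : ↥D => (i : Fin p)) (fun j : ↥F => (j : Fin p))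
          * (Ω.submatrix (fun i : ↥F => (i : Fin p)) (fun j : ↥F => (j : Fin p)))⁻¹
          * Ω.submatrix (fun i : ↥F => (i : Fin p)) (fun j : ↥D => (j : Fin p))) *ᵥ ξ)} := rfl
  rw [hdef]
  refine le_csInf ⟨(fun _ : ↥D => (1 : ℝ)) ⬝ᵥ ((Ω.submatrix (fun i : ↥D => (i : Fin p)) (fun j : ↥D => (j : Fin p))
        - Ω.submatrix (fun i : ↥D => (i : Fin p)) (fun j : ↥F => (j : Fin p))
          * (Ω.submatrix (fun i : ↥F => (i : Fin p)) (fun j : ↥F => (j : Fin p)))⁻¹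
          * Ω.submatrix (fun i : ↥F => (i : Fin p)) (fun j : ↥D => (j : Fin p))) *ᵥ (fun _ => 1)),
      fun _ => 1, fun _ => by norm_num, rfl⟩ ?_
  rintro q ⟨ξ, hξ, rfl⟩
  set κD : ↥D → Fin p := fun i => (i : Fin p) with hκD
  set κF : ↥F → Fin p := fun i => (i : Fin p) with hκF
  set κU : ↥(D ∪ F) → Fin p := fun i => (i : Fin p) with hκU
  set A := Ω.submatrix κD κD with hA
  set B₁ := Ω.submatrix κD κF with hB₁
  set B₂ := Ω.submatrix κF κD with hB₂
  set C := Ω.submatrix κF κF with hC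
  have hCpd : C.PosDef := posdef_submatrix hpd F
  have hCdet : IsUnit C.det := isUnit_iff_ne_zero.mpr (ne_of_gt hCpd.det_pos)
  set η : ↥F → ℝ := -((C⁻¹ * B₂) *ᵥ ξ) with hη
  set e := unionEquiv hDF with he
  set ζ : ↥(D ∪ F) → ℝ := fun x => if h : (x : Fin p) ∈ D then ξ ⟨x, h⟩
      else η ⟨x, (Finset.mem_union.mp x.2).resolve_left h⟩ with hζ
  have hζe : ζ ∘ e = Sum.elim ξ η := by
    funext s
    rcases s with i | i
    · simp [hζ, he, unionEquiv, i.2]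
    · have h : (i : Fin p) ∉ D := fun h => (Finset.disjoint_left.mp hDF h) i.2
      simp [hζ, he, unionEquiv, h]
  set M := Ω.submatrix κU κU with hM
  set Q := ζ ⬝ᵥ (M *ᵥ ζ) with hQ
  have key : ξ ⬝ᵥ ((A - B₁ * C⁻¹ * B₂) *ᵥ ξ) = Q := by
    have h1 : M.submatrix e e = Matrix.fromBlocks A B₁ B₂ C := by
      ext (i | i) (j | j) <;> rfl
    have h2 : Q = (ζ ∘ e) ⬝ᵥ ((M.submatrix e e) *ᵥ (ζ ∘ e)) := by
      rw [Matrix.submatrix_mulVec_equiv]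
      have h3 : (ζ ∘ e) ∘ e.symm = ζ := by funext x; simp
      rw [h3, hQ]
      exact (Fintype.sum_equiv e _ _ fun s => rfl).symm
    have hCη : C *ᵥ η = -(B₂ *ᵥ ξ) := by
      rw [hη, Matrix.mulVec_neg, Matrix.mulVec_mulVec, ← Matrix.mul_assoc,
        Matrix.mul_nonsing_inv C hCdet, Matrix.one_mul]
    have hB₁η : B₁ *ᵥ η = -((B₁ * C⁻¹ * B₂) *ᵥ ξ) := by
      rw [hη, Matrix.mulVec_neg, Matrix.mulVec_mulVec, Matrix.mul_assoc]
    rw [h2, h1, hζe, Matrix.fromBlocks_mulVec]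
    have hl : (Sum.elim ξ η) ∘ Sum.inl = ξ := rfl
    have hr : (Sum.elim ξ η) ∘ Sum.inr = η := rfl
    rw [hl, hr, sumElim_dotProduct_sumElim, hCη, hB₁η, Matrix.sub_mulVec]
    simp only [dotProduct_add, dotProduct_sub, dotProduct_neg,
      dotProduct_zero]
    ring
  set n2 : ℝ := ∑ x, ζ x ^ 2 with hn2
  have hn2split : n2 = (∑ i, ξ i ^ 2) + ∑ i, η i ^ 2 := by
    rw [hn2, ← Equiv.sum_comp e (fun x => ζ x ^ 2)]
    have : ∀ s, ζ (e s) ^ 2 = Sum.elim ξ η s ^ 2 := fun s => by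
      rw [← Function.comp_apply (f := ζ) (g := e), hζe]
    rw [Fintype.sum_congr _ _ this, Fintype.sum_sum_type]
    simp
  have hξ2 : (D.card : ℝ) ≤ ∑ i, ξ i ^ 2 := by
    calc (D.card : ℝ) = ∑ _i : ↥D, (1 : ℝ) := by simp
    _ ≤ ∑ i, ξ i ^ 2 := by
        apply Finset.sum_le_sum
        intro i _
        have h := hξ i
        nlinarith [abs_nonneg (ξ i), sq_abs (ξ i)]
  have hη2 : 0 ≤ ∑ i, η i ^ 2 := Finset.sum_nonneg fun i _ => sq_nonneg _
  have hn2d : (D.card : ℝ) ≤ n2 := by rw [hn2split]; linarith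
  have hcardpos : (0 : ℝ) < D.card := by exact_mod_cast hD.card_pos
  have hn2pos : 0 < n2 := lt_of_lt_of_le hcardpos hn2d
  set ν : ℝ := Real.sqrt n2 with hν
  have hνpos : 0 < ν := Real.sqrt_pos.mpr hn2pos
  have hν2 : ν ^ 2 = n2 := Real.sq_sqrt hn2pos.le
  set ζ' : ↥(D ∪ F) → ℝ := fun x => ζ x / ν with hζ'
  set R := ζ' ⬝ᵥ (M *ᵥ ζ') with hR
  have hζ'norm : (∑ i, ζ' i ^ 2) = 1 := by
    rw [hζ']
    simp only [div_pow, ← Finset.sum_div]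
    rw [hν2, ← hn2, div_self (ne_of_gt hn2pos)]
  have hRQ : Q = n2 * R := by
    have hs : ζ' = ν⁻¹ • ζ := by
      funext x; simp [hζ', div_eq_inv_mul]
    rw [hR, hs, Matrix.mulVec_smul, smul_dotProduct, dotProduct_smul,
      smul_eq_mul, smul_eq_mul, ← hQ]
    have hνν : ν * ν = n2 := by nlinarith [hν2]
    rw [← hνν]
    have h1 : ν * ν⁻¹ = 1 := mul_inv_cancel₀ (ne_of_gt hνpos)
    calc Q = (ν * ν⁻¹) * ((ν * ν⁻¹) * Q) := by rw [h1]; ring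
    _ = ν * ν * (ν⁻¹ * (ν⁻¹ * Q)) := by ring
  have hbdd : BddBelow {lam : ℝ | ∃ S : Finset (Fin p), S.card = D.card + F.card ∧
      ∃ ξ : ↥S → ℝ, (∑ i, ξ i ^ 2) = 1 ∧
      lam = ξ ⬝ᵥ (Ω.submatrix (fun i : ↥S => (i : Fin p)) (fun j : ↥S => (j : Fin p)) *ᵥ ξ)} := by
    refine ⟨0, ?_⟩
    rintro x ⟨S, -, ξ', -, rfl⟩
    exact quadform_nonneg hpd S ξ'
  have hmem : R ∈ {lam : ℝ | ∃ S : Finset (Fin p), S.card = D.card + F.card ∧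
      ∃ ξ : ↥S → ℝ, (∑ i, ξ i ^ 2) = 1 ∧
      lam = ξ ⬝ᵥ (Ω.submatrix (fun i : ↥S => (i : Fin p)) (fun j : ↥S => (j : Fin p)) *ᵥ ξ)} :=
    ⟨D ∪ F, Finset.card_union_of_disjoint hDF, ζ', hζ'norm, by rw [hR, hM]⟩
  have hlam : lambdaStar Ω (D.card + F.card) ≤ R := csInf_le hbdd hmem
  have hBR : B ≤ R := hBl.trans hlam
  rw [key, hRQ]
  nlinarith [hn2d, hB, hBR, hn2pos]

end Key

section One

variable {p : ℕ} {Ω : Matrix (Fin p) (Fin p) ℝ}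

lemma singleton_quad (hdiag : ∀ i, Ω i i = 1) (b : Fin p)
    (ξ : ↥({b} : Finset (Fin p)) → ℝ) (hξ : (∑ i, ξ i ^ 2) = 1) :
    ξ ⬝ᵥ (Ω.submatrix (fun i : ↥({b} : Finset (Fin p)) => (i : Fin p))
      (fun j : ↥({b} : Finset (Fin p)) => (j : Fin p)) *ᵥ ξ) = 1 := by
  haveI : Unique ↥({b} : Finset (Fin p)) :=
    ⟨⟨⟨b, Finset.mem_singleton_self b⟩⟩, fun x => Subtype.ext (Finset.mem_singleton.mp x.2)⟩
  have h1 : ξ ⬝ᵥ (Ω.submatrix (fun i : ↥({b} : Finset (Fin p)) => (i : Fin p))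
      (fun j : ↥({b} : Finset (Fin p)) => (j : Fin p)) *ᵥ ξ)
      = ξ default * (Ω b b * ξ default) := by
    have hb : ((default : ↥({b} : Finset (Fin p))) : Fin p) = b :=
      Finset.mem_singleton.mp (default : ↥({b} : Finset (Fin p))).2
    simp only [dotProduct, Matrix.mulVec, Fintype.sum_unique, Matrix.submatrix_apply, hb]
  have h2 : (∑ i, ξ i ^ 2) = ξ default ^ 2 := by
    simp [Fintype.sum_unique]
  rw [h1, hdiag b]
  rw [h2] at hξ
  nlinarith [hξ]

lemma lambdaStar_one_ge (hdiag : ∀ i, Ω i i = 1) (a : Fin p) :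
    (1 : ℝ) ≤ lambdaStar Ω 1 := by
  haveI : Unique ↥({a} : Finset (Fin p)) :=
    ⟨⟨⟨a, Finset.mem_singleton_self a⟩⟩, fun x => Subtype.ext (Finset.mem_singleton.mp x.2)⟩
  rw [lambdaStar]
  refine le_csInf ⟨1, {a}, Finset.card_singleton a, fun _ => 1, by simp [Fintype.sum_unique],
    (singleton_quad hdiag a (fun _ => 1) (by simp [Fintype.sum_unique])).symm⟩ ?_
  rintro x ⟨S, hS, ξ, hξ, rfl⟩
  obtain ⟨b, rfl⟩ := Finset.card_eq_one.mp hS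
  rw [singleton_quad hdiag b ξ hξ]

end One

set_option maxHeartbeats 1000000 in
/-- Let `0 < ϑ < r`, `T = r/ϑ`, and let `N ≥ 1` be the unique integer
with `2N − 1 ≤ (T + 1/T)/2 < 2N + 1`. Suppose `Ω` is a `p×p` real symmetric positive
definite matrix with unit diagonal satisfying, for every `2 ≤ k ≤ 2N − 1` and every
integer `j` with `(k+1)/2 ≤ j ≤ min(k, N)`,
`λ_k*(Ω) ≥ ((T+1/T)/2 − 2j + 2 + √(((T+1/T)/2 − 2j + 2)² − 1)) / ((2k − 2j + 1)T)`,
and for every `2 ≤ k ≤ 2N` and every integer `j` with `k/2 ≤ j ≤ min(k−1, N)`,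
`λ_k*(Ω) ≥ ((T+1/T)/2 + 1 − 2j) / ((k − j)T)`.
Then for every pair of disjoint subsets `D, F` with `D` nonempty,
`ρ(D,F;Ω) ≥ (ϑ + r)²/(4r)`. -/
theorem rho_lower_bound_cor_main
    (p : ℕ) (Ω : Matrix (Fin p) (Fin p) ℝ) (hsymm : Ω.IsSymm) (hpd : Ω.PosDef)
    (hdiag : ∀ i, Ω i i = 1)
    (ϑ r T : ℝ) (h0 : 0 < ϑ) (h1 : ϑ < r) (hT : T = r / ϑ)
    (N : ℕ) (hN : 1 ≤ N)
    (hN1 : 2 * (N : ℝ) - 1 ≤ (T + 1 / T) / 2)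
    (hN2 : (T + 1 / T) / 2 < 2 * (N : ℝ) + 1)
    (hodd : ∀ k j : ℕ, 2 ≤ k → k + 1 ≤ 2 * N →
      ((k : ℝ) + 1) / 2 ≤ (j : ℝ) → j ≤ k → j ≤ N →
      ((T + 1 / T) / 2 - 2 * (j : ℝ) + 2
          + Real.sqrt (((T + 1 / T) / 2 - 2 * (j : ℝ) + 2) ^ 2 - 1))
        / ((2 * (k : ℝ) - 2 * (j : ℝ) + 1) * T) ≤ lambdaStar Ω k)
    (heven : ∀ k j : ℕ, 2 ≤ k → k ≤ 2 * N →
      (k : ℝ) / 2 ≤ (j : ℝ) → j + 1 ≤ k → j ≤ N →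
      ((T + 1 / T) / 2 + 1 - 2 * (j : ℝ)) / (((k : ℝ) - (j : ℝ)) * T) ≤ lambdaStar Ω k)
    (D F : Finset (Fin p)) (hD : D.Nonempty) (hDF : Disjoint D F) :
    (ϑ + r) ^ 2 / (4 * r) ≤ rhoDF Ω ϑ r D F := by
  classical
  set Mc : ℝ := (T + 1 / T) / 2 with hMc
  have hr : (0 : ℝ) < r := lt_trans h0 h1
  have hT1 : 1 < T := by rw [hT]; exact (one_lt_div h0).mpr h1
  have hTpos : (0 : ℝ) < T := by linarith
  have hϑne : ϑ ≠ 0 := ne_of_gt h0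
  have hTne : T ≠ 0 := ne_of_gt hTpos
  have hrT : r = T * ϑ := by rw [hT]; field_simp
  have hTinv : T * (1 / T) = 1 := by field_simp
  have hMc1 : 1 < Mc := by
    have hsq : 0 < (T - 1) ^ 2 := pow_pos (by linarith) 2
    have hdiv : 0 < (T - 1) ^ 2 / T := div_pos hsq hTpos
    have hexp : T + 1 / T - 2 = (T - 1) ^ 2 / T := by field_simp; ring
    rw [hMc]
    rw [lt_div_iff₀ (by norm_num : (0 : ℝ) < 2)]
    linarith
  have htarget : (ϑ + r) ^ 2 / (4 * r) = (Mc + 1) * ϑ / 2 := by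
    rw [hMc, hrT]; field_simp; ring
  have hω0 : 0 ≤ omegaDF Ω D F := by
    have h := omega_ge hpd hD hDF (le_refl (0 : ℝ)) (lambdaStar_nonneg hpd (D.card + F.card))
    simpa using h
  have hf0 : (0 : ℝ) ≤ (F.card : ℝ) := Nat.cast_nonneg _
  by_cases hpar : Even D.card
  · -- even case
    obtain ⟨m, hm⟩ := hpar
    have hpar' : Even D.card := ⟨m, hm⟩
    have hm1 : 1 ≤ m := by
      rcases Nat.eq_zero_or_pos m with h | h
      · exfalso
        apply hD.ne_empty
        apply Finset.card_eq_zero.mp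
        omega
      · exact h
    have hdcast : (D.card : ℝ) = 2 * m := by rw [hm]; push_cast; ring
    unfold rhoDF
    rw [if_pos hpar', htarget]
    by_cases htriv : Mc + 1 ≤ (D.card : ℝ) + 2 * F.card
    · linarith [mul_le_mul_of_nonneg_right htriv h0.le, mul_nonneg hω0 hr.le]
    · push_neg at htriv
      have hjN : m + F.card ≤ N := by
        by_contra hcon
        push_neg at hcon
        have hx : (N : ℝ) + 1 ≤ (m : ℝ) + F.card := by exact_mod_cast hcon
        have : 2 * (N : ℝ) + 2 ≤ (D.card : ℝ) + 2 * F.card := by rw [hdcast]; linarith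
        linarith [hN2, htriv]
      have hlam := heven (m + m + F.card) (m + F.card) (by omega) (by omega)
        (by push_cast; linarith) (by omega) hjN
      set Bv : ℝ := (Mc + 1 - ((D.card : ℝ) + 2 * F.card)) / ((m : ℝ) * T) with hBv
      have hmne : (m : ℝ) ≠ 0 := by
        have : (0 : ℝ) < m := by exact_mod_cast hm1
        exact ne_of_gt this
      have hlam' : Bv ≤ lambdaStar Ω (D.card + F.card) := by
        rw [show D.card + F.card = m + m + F.card by omega]
        have heq : Bv = (Mc + 1 - 2 * ((m + F.card : ℕ) : ℝ))
            / ((((m + m + F.card : ℕ) : ℝ) - ((m + F.card : ℕ) : ℝ)) * T) := by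
          rw [hBv, hdcast]
          push_cast
          rw [show ((m : ℝ) + m + F.card - (m + F.card)) = (m : ℝ) by ring]
          ring_nf
        rw [heq]
        exact hlam
      have hBvpos : 0 ≤ Bv := by
        apply div_nonneg
        · linarith
        · have : (0 : ℝ) < m := by exact_mod_cast hm1
          positivity
      have hKey := omega_ge hpd hD hDF hBvpos hlam'
      have hval : (D.card : ℝ) * Bv = 2 * (Mc + 1 - ((D.card : ℝ) + 2 * F.card)) / T := by
        rw [hBv, hdcast]
        field_simp
      rw [hval] at hKey
      have h5 : 2 * (Mc + 1 - ((D.card : ℝ) + 2 * F.card)) / T * r ≤ omegaDF Ω D F * r :=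
        mul_le_mul_of_nonneg_right hKey hr.le
      have h6 : 2 * (Mc + 1 - ((D.card : ℝ) + 2 * F.card)) / T * r
          = 2 * (Mc + 1 - ((D.card : ℝ) + 2 * F.card)) * ϑ := by
        rw [hrT]; field_simp
      rw [h6] at h5
      linarith
  · -- odd case
    obtain ⟨a, _⟩ := hD
    have hoddD : Odd D.card := by
      rcases Nat.even_or_odd D.card with he | ho
      · exact absurd he hpar
      · exact ho
    obtain ⟨m, hm⟩ := hoddD
    have hdcast : (D.card : ℝ) = 2 * m + 1 := by rw [hm]; push_cast; ring
    unfold rhoDF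
    rw [if_neg hpar, htarget]
    by_cases htriv : Mc ≤ (D.card : ℝ) + 2 * F.card
    · linarith [sq_nonneg (max (Real.sqrt (omegaDF Ω D F * r)
          - ϑ / Real.sqrt (omegaDF Ω D F * r)) 0),
        mul_le_mul_of_nonneg_right htriv h0.le]
    · push_neg at htriv
      set c : ℝ := Mc - ((D.card : ℝ) + 2 * F.card) + 1 with hc
      have hc1 : 1 < c := by rw [hc]; linarith
      set s : ℝ := Real.sqrt (c ^ 2 - 1) with hs
      have hs2 : s ^ 2 = c ^ 2 - 1 := Real.sq_sqrt (by
        have hexp : (c - 1) * (c + 1) = c ^ 2 - 1 := by ring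
        have hnn := mul_nonneg (by linarith : (0:ℝ) ≤ c - 1) (by linarith : (0:ℝ) ≤ c + 1)
        linarith)
      have hsnn : 0 ≤ s := Real.sqrt_nonneg _
      have hu : c + s ≤ omegaDF Ω D F * T := by
        by_cases h10 : m = 0 ∧ F.card = 0
        · obtain ⟨hm0, hf00⟩ := h10
          have hd1 : D.card = 1 := by omega
          have hcM : c = Mc := by
            rw [hc, hdcast, hm0, hf00]
            push_cast
            ring
          have hMsq : Mc ^ 2 - 1 = ((T - 1 / T) / 2) ^ 2 := by
            rw [hMc]; field_simp; ring
          have hTge : 0 ≤ (T - 1 / T) / 2 := by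
            have h1T : 1 / T ≤ 1 := by
              rw [div_le_one hTpos]; linarith
            linarith
          have hsT : s = (T - 1 / T) / 2 := by
            rw [hs, hcM, hMsq, Real.sqrt_sq hTge]
          have hω1 : (1 : ℝ) ≤ omegaDF Ω D F := by
            have h1l : (1 : ℝ) ≤ lambdaStar Ω (D.card + F.card) := by
              rw [hd1, hf00]
              exact lambdaStar_one_ge hdiag a
            have h := omega_ge hpd ⟨a, ‹a ∈ D›⟩ hDF (by norm_num : (0 : ℝ) ≤ 1) h1l
            rw [hd1] at h
            simpa using h
          have hsum : c + s = T := by rw [hcM, hsT, hMc]; ring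
          rw [hsum]
          calc T = 1 * T := (one_mul T).symm
          _ ≤ omegaDF Ω D F * T := mul_le_mul_of_nonneg_right hω1 hTpos.le
        · have hjN : m + 1 + F.card ≤ N := by
            by_contra hcon
            push_neg at hcon
            have hx0 : (N : ℝ) + 1 ≤ (m : ℝ) + 1 + F.card := by exact_mod_cast hcon
            have hx : 2 * (N : ℝ) + 1 ≤ (D.card : ℝ) + 2 * F.card := by
              rw [hdcast]; linarith
            linarith [hN2, htriv]
          have hlam := hodd (2 * m + 1 + F.card) (m + 1 + F.card) (by omega) (by omega)
            (by push_cast; linarith) (by omega) hjN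
          have e1 : Mc - 2 * ((m + 1 + F.card : ℕ) : ℝ) + 2 = c := by
            rw [hc, hdcast]; push_cast; ring
          have e2 : 2 * ((2 * m + 1 + F.card : ℕ) : ℝ) - 2 * ((m + 1 + F.card : ℕ) : ℝ) + 1
              = (D.card : ℝ) := by
            rw [hdcast]; push_cast; ring
          rw [e1, e2] at hlam
          rw [show 2 * m + 1 + F.card = D.card + F.card by omega] at hlam
          rw [← hs] at hlam
          have hdpos : (0 : ℝ) < D.card := by
            rw [hdcast]; positivity
          have hBpos : 0 ≤ (c + s) / ((D.card : ℝ) * T) := by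
            apply div_nonneg
            · linarith
            · exact (mul_pos hdpos hTpos).le
          have hKey := omega_ge hpd ⟨a, ‹a ∈ D›⟩ hDF hBpos hlam
          have hval : (D.card : ℝ) * ((c + s) / ((D.card : ℝ) * T)) = (c + s) / T := by
            rw [mul_div_assoc']; exact mul_div_mul_left _ _ (ne_of_gt hdpos)
          rw [hval] at hKey
          rw [div_le_iff₀ hTpos] at hKey
          exact hKey
      set u : ℝ := omegaDF Ω D F * T with huu
      have hu1 : 1 < u := by linarith
      have hupos : 0 < u := by linarith
      have hωpos : 0 < omegaDF Ω D F := by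
        by_contra hcontra
        push_neg at hcontra
        have : u ≤ 0 := mul_nonpos_of_nonpos_of_nonneg hcontra hTpos.le
        linarith
      have hωr : omegaDF Ω D F * r = u * ϑ := by rw [huu, hrT]; ring
      have hωrpos : 0 < omegaDF Ω D F * r := mul_pos hωpos hr
      set q : ℝ := Real.sqrt (omegaDF Ω D F * r) with hq
      have hq2 : q ^ 2 = u * ϑ := by rw [hq, Real.sq_sqrt hωrpos.le, hωr]
      have hqpos : 0 < q := Real.sqrt_pos.mpr hωrpos
      have hqne : q ≠ 0 := ne_of_gt hqpos
      have hϑq : ϑ / q ≤ q := by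
        rw [div_le_iff₀ hqpos]
        have hqq : q * q = u * ϑ := by rw [← hq2]; ring
        have h1u : ϑ ≤ u * ϑ := le_mul_of_one_le_left h0.le hu1.le
        linarith
      have hmax : max (q - ϑ / q) 0 = q - ϑ / q := max_eq_left (by linarith)
      rw [hmax]
      have hquad : 0 ≤ u ^ 2 - 2 * c * u + 1 := by
        have h1' : 0 ≤ u - (c + s) := by linarith
        have h2' : 0 ≤ u - (c - s) := by linarith
        have hexp : (u - (c + s)) * (u - (c - s)) = u ^ 2 - 2 * c * u + (c ^ 2 - s ^ 2) := by
          ring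
        linarith [mul_nonneg h1' h2', hs2, hexp]
      have hid : (q - ϑ / q) ^ 2 * q ^ 2 = (q ^ 2 - ϑ) ^ 2 := by
        field_simp
      have hgoal2 : 2 * (c - 1) * ϑ * q ^ 2 ≤ (q ^ 2 - ϑ) ^ 2 := by
        rw [hq2]
        have hexp2 : (u * ϑ - ϑ) ^ 2 - 2 * (c - 1) * ϑ * (u * ϑ)
            = (u ^ 2 - 2 * c * u + 1) * ϑ ^ 2 := by ring
        linarith [mul_nonneg hquad (sq_nonneg ϑ), hexp2]
      have hfinal : 2 * (c - 1) * ϑ ≤ (q - ϑ / q) ^ 2 := by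
        rw [← hid] at hgoal2
        exact le_of_mul_le_mul_right hgoal2 (pow_pos hqpos 2)
      linarith [hfinal]
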